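/- Let F, G ∈ SO(3) with tr(F) > 1 and tr(G) > 1 (equivalently, rotation angles strictly less than π/2). If F − Fᵀ = G − Gᵀ, then F = G. In particular, a rotation matrix whose rotation angle is less than π/2 is uniquely determined by its skew-symmetric part. -/

import Mathlib

open Matrix

lemma triple_nonneg {a b c : ℝ} (ha : a ≤ 2) (hb : b ≤ 2) (hc : c ≤ 2)
    (hsum : 2 < a + b + c) (hprod : 0 ≤ a * b * c) :
    0 ≤ a ∧ 0 ≤ b ∧ 0 ≤ c := by
  refine ⟨?_, ?_, ?_⟩ <;> by_contra h <;> push_neg at h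
  · rcases le_or_gt b 0 with hb0 | hb0
    · linarith
    · rcases le_or_gt c 0 with hc0 | hc0
      · linarith
      · nlinarith [mul_pos hb0 hc0]
  · rcases le_or_gt a 0 with h0 | h0
    · linarith
    · rcases le_or_gt c 0 with hc0 | hc0
      · linarith
      · nlinarith [mul_pos h0 hc0]
  · rcases le_or_gt a 0 with h0 | h0
    · linarith
    · rcases le_or_gt b 0 with hb0 | hb0
      · linarith
      · nlinarith [mul_pos h0 hb0]

lemma det_one_add_mul_self_nonneg (M : Matrix (Fin 3) (Fin 3) ℝ) :
    0 ≤ (1 + M * M).det := by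
  set N : Matrix (Fin 3) (Fin 3) ℂ := M.map (Complex.ofReal) with hN
  set A : Matrix (Fin 3) (Fin 3) ℂ := 1 + Complex.I • N with hA
  have hmap : A.map (starRingEnd ℂ) = 1 - Complex.I • N := by
    ext i j
    simp [hA, hN, Matrix.map_apply, Matrix.one_apply, apply_ite, Complex.conj_I,
      sub_eq_add_neg]
  have hconj : (starRingEnd ℂ) A.det = (1 - Complex.I • N).det := by
    rw [RingHom.map_det, RingHom.mapMatrix_apply, hmap]
  have hmul : A * (1 - Complex.I • N) = 1 + N * N := by
    rw [hA]
    rw [mul_sub, add_mul, add_mul, one_mul, mul_one, smul_mul_smul_comm]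
    simp [Complex.I_mul_I]
    abel
  have hm : (1 + M * M).map (Complex.ofRealHom) = 1 + N * N := by
    ext i j
    simp [hN, Matrix.map_apply, Matrix.one_apply, apply_ite, Matrix.mul_apply]
  have hdet : ((1 + M * M).det : ℂ) = A.det * (starRingEnd ℂ) A.det := by
    rw [hconj, ← det_mul, hmul, ← hm, ← RingHom.mapMatrix_apply, ← RingHom.map_det]
    rfl
  rw [Complex.mul_conj] at hdet
  have h2 : (1 + M * M).det = Complex.normSq A.det := by exact_mod_cast hdet
  rw [h2]
  exact Complex.normSq_nonneg _


lemma trace_eq_sum_eig {P : Matrix (Fin 3) (Fin 3) ℝ} (hP : P.IsHermitian) :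
    P.trace = ∑ i, hP.eigenvalues i := by
  rw [hP.trace_eq_sum_eigenvalues]
  simp

lemma eig_le_two {P : Matrix (Fin 3) (Fin 3) ℝ} (hP : P.IsHermitian)
    (hbound : ((4 : ℝ) • (1 : Matrix (Fin 3) (Fin 3) ℝ) - P * P).PosSemidef) (i : Fin 3) :
    hP.eigenvalues i ≤ 2 := by
  set lam := hP.eigenvalues i with hlam
  set v : Fin 3 → ℝ := ⇑(hP.eigenvectorBasis i) with hv
  have hvne : v ≠ 0 := by
    have := hP.eigenvectorBasis.orthonormal.ne_zero i
    intro hcontra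
    apply this
    ext j
    exact congrFun hcontra j
  have hvv : 0 < v ⬝ᵥ v := by
    have h0 : 0 ≤ v ⬝ᵥ v := Finset.sum_nonneg fun i _ => mul_self_nonneg _
    have hne : v ⬝ᵥ v ≠ 0 := fun h => hvne ((dotProduct_self_eq_zero).mp h)
    exact lt_of_le_of_ne h0 (Ne.symm hne)
  have hmv : P *ᵥ v = lam • v := hP.mulVec_eigenvectorBasis i
  have hkey := hbound.dotProduct_mulVec_nonneg v
  have hcalc : ((4 : ℝ) • (1 : Matrix (Fin 3) (Fin 3) ℝ) - P * P) *ᵥ v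
      = (4 - lam ^ 2) • v := by
    rw [sub_mulVec, smul_mulVec, one_mulVec, ← mulVec_mulVec, hmv, mulVec_smul, hmv,
      smul_smul, sub_smul]
    ring_nf
  rw [hcalc] at hkey
  simp only [star_trivial, dotProduct_smul, smul_eq_mul, RCLike.re_to_real] at hkey
  by_contra hgt
  push_neg at hgt
  have h4 : 4 - lam ^ 2 < 0 := by nlinarith
  have hneg := mul_neg_of_neg_of_pos h4 hvv
  linarith

lemma psd_of_conditions {P : Matrix (Fin 3) (Fin 3) ℝ} (hP : P.IsHermitian)
    (hbound : ((4 : ℝ) • (1 : Matrix (Fin 3) (Fin 3) ℝ) - P * P).PosSemidef)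
    (hdet : 0 ≤ P.det) (htr : 2 < P.trace) : P.PosSemidef := by
  refine hP.posSemidef_iff_eigenvalues_nonneg.mpr ?_
  have htr' : 2 < hP.eigenvalues 0 + hP.eigenvalues 1 + hP.eigenvalues 2 := by
    rw [trace_eq_sum_eig hP, Fin.sum_univ_three] at htr
    exact htr
  have hdet' : 0 ≤ hP.eigenvalues 0 * hP.eigenvalues 1 * hP.eigenvalues 2 := by
    have h := hP.det_eq_prod_eigenvalues
    rw [Fin.prod_univ_three] at h
    rw [show P.det = ((P.det : ℝ)) from rfl] at hdet
    rw [h] at hdet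
    exact_mod_cast hdet
  obtain ⟨h0, h1, h2⟩ := triple_nonneg (eig_le_two hP hbound 0) (eig_le_two hP hbound 1)
    (eig_le_two hP hbound 2) htr' hdet'
  intro i
  fin_cases i <;> assumption

/-- A rotation matrix in `SO(3)` with trace greater than `1` (equivalently,
rotation angle less than `π/2`) is uniquely determined by its skew-symmetric
part: if `F, G ∈ SO(3)`, `tr F > 1`, `tr G > 1` and `F − Fᵀ = G − Gᵀ`, then
`F = G`. -/
theorem rotation_determined_by_skew_part (F G : Matrix (Fin 3) (Fin 3) ℝ)
    (hF : Fᵀ * F = 1) (hFdet : F.det = 1) (hFtr : 1 < F.trace)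
    (hG : Gᵀ * G = 1) (hGdet : G.det = 1) (hGtr : 1 < G.trace)
    (hskew : F - Fᵀ = G - Gᵀ) : F = G := by
  have hFFt : F * Fᵀ = 1 := mul_eq_one_comm.mp hF
  have hGGt : G * Gᵀ = 1 := mul_eq_one_comm.mp hG
  have h41 : (4 : ℝ) • (1 : Matrix (Fin 3) (Fin 3) ℝ) = 1 + 1 + 1 + 1 := by
    rw [show (4 : ℝ) = (1 : ℝ) + 1 + 1 + 1 by norm_num, add_smul, add_smul, add_smul, one_smul]
  set S := F - Fᵀ with hS
  set P := F + Fᵀ with hPdef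
  set Q := G + Gᵀ with hQdef
  have hPherm : P.IsHermitian := by
    rw [Matrix.IsHermitian, conjTranspose_eq_transpose_of_trivial, hPdef, transpose_add,
      transpose_transpose, add_comm]
  have hQherm : Q.IsHermitian := by
    rw [Matrix.IsHermitian, conjTranspose_eq_transpose_of_trivial, hQdef, transpose_add,
      transpose_transpose, add_comm]
  have hPP : P * P = (4 : ℝ) • (1 : Matrix (Fin 3) (Fin 3) ℝ) - Sᵀ * S := by
    rw [hPdef, hS, h41, transpose_sub, transpose_transpose]
    rw [add_mul, mul_add, mul_add, sub_mul, mul_sub, mul_sub, hF, hFFt]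
    abel
  have hQQ : Q * Q = (4 : ℝ) • (1 : Matrix (Fin 3) (Fin 3) ℝ) - Sᵀ * S := by
    rw [hQdef, hskew, h41, transpose_sub, transpose_transpose]
    rw [add_mul, mul_add, mul_add, sub_mul, mul_sub, mul_sub, hG, hGGt]
    abel
  have hStS : (Sᵀ * S).PosSemidef := by
    have := posSemidef_conjTranspose_mul_self S
    rwa [conjTranspose_eq_transpose_of_trivial] at this
  have hbP : ((4 : ℝ) • (1 : Matrix (Fin 3) (Fin 3) ℝ) - P * P).PosSemidef := by
    rw [hPP, sub_sub_cancel]; exact hStS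
  have hbQ : ((4 : ℝ) • (1 : Matrix (Fin 3) (Fin 3) ℝ) - Q * Q).PosSemidef := by
    rw [hQQ, sub_sub_cancel]; exact hStS
  have hdetP : 0 ≤ P.det := by
    have hfact : P = Fᵀ * (1 + F * F) := by
      rw [mul_add, mul_one, ← mul_assoc, hF, one_mul, hPdef, add_comm]
    rw [hfact, det_mul, det_transpose, hFdet, one_mul]
    exact det_one_add_mul_self_nonneg F
  have hdetQ : 0 ≤ Q.det := by
    have hfact : Q = Gᵀ * (1 + G * G) := by
      rw [mul_add, mul_one, ← mul_assoc, hG, one_mul, hQdef, add_comm]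
    rw [hfact, det_mul, det_transpose, hGdet, one_mul]
    exact det_one_add_mul_self_nonneg G
  have htrP : 2 < P.trace := by rw [hPdef, trace_add, trace_transpose]; linarith
  have htrQ : 2 < Q.trace := by rw [hQdef, trace_add, trace_transpose]; linarith
  have hPpsd := psd_of_conditions hPherm hbP hdetP htrP
  have hQpsd := psd_of_conditions hQherm hbQ hdetQ htrQ
  have hPQ : P = Q := by
    open scoped MatrixOrder Norms.L2Operator in
    exact (CFC.sq_eq_sq_iff P Q hPpsd.nonneg hQpsd.nonneg).mp (by rw [pow_two, pow_two, hPP, hQQ])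
  have hFF : F + F = G + G := by
    have h1 : P + S = F + F := by rw [hPdef, hS]; abel
    have h2 : Q + S = G + G := by rw [hQdef, hskew]; abel
    rw [← h1, ← h2, hPQ]
  have h2F : (2 : ℝ) • F = (2 : ℝ) • G := by rw [two_smul, two_smul]; exact hFF
  exact smul_right_injective (Matrix (Fin 3) (Fin 3) ℝ) two_ne_zero h2F
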